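/- Let V be a finite-dimensional real vector space with a linear map L : V → V, and let F ⊆ V be a nonempty compact set such that L maps F onto F. Suppose V = span(c⁺) ⊕ H where L(c⁺) = c⁺, H is L-invariant, and the spectral radius of L restricted to H is strictly less than 1. Then F ⊆ span(c⁺). -/

import Mathlib

open Filter Finset TensorProduct

/-- `C(n,j) * r^(n-j) → 0` when `0 ≤ r < 1`. -/
lemma aux_tendsto_choose_mul_pow {r : ℝ} (hr0 : 0 ≤ r) (hr1 : r < 1) (j : ℕ) :
    Tendsto (fun n : ℕ => (n.choose j : ℝ) * r ^ (n - j)) atTop (nhds 0) := by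
  rcases eq_or_lt_of_le hr0 with h0 | h0
  · apply Tendsto.congr' _ (tendsto_const_nhds (x := (0 : ℝ)))
    filter_upwards [eventually_ge_atTop (j + 1)] with n hn
    have hnj : n - j ≠ 0 := by omega
    rw [← h0, zero_pow hnj, mul_zero]
  · have key : Tendsto (fun n : ℕ => (r ^ j)⁻¹ * ((n : ℝ) ^ j * r ^ n)) atTop (nhds 0) := by
      simpa using (tendsto_pow_const_mul_const_pow_of_lt_one j hr0 hr1).const_mul ((r ^ j)⁻¹)
    apply squeeze_zero' ?_ ?_ key
    · filter_upwards with n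
      positivity
    · filter_upwards [eventually_ge_atTop j] with n hn
      have h1 : (n.choose j : ℝ) ≤ (n : ℝ) ^ j := by
        exact_mod_cast Nat.choose_le_pow n j
      calc (n.choose j : ℝ) * r ^ (n - j)
          ≤ (n : ℝ) ^ j * r ^ (n - j) :=
            mul_le_mul_of_nonneg_right h1 (by positivity)
        _ = (r ^ j)⁻¹ * ((n : ℝ) ^ j * r ^ n) := by
            rw [pow_sub₀ r (ne_of_gt h0) hn]; ring

/-- If all eigenvalues of a complex endomorphism of a finite-dimensional normed space
have norm `< 1`, then its iterates tend pointwise to zero. -/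
lemma aux_complex_decay {W : Type*} [NormedAddCommGroup W] [NormedSpace ℂ W]
    [FiniteDimensional ℂ W] (T : Module.End ℂ W)
    (h : ∀ μ : ℂ, T.HasEigenvalue μ → ‖μ‖ < 1) (w : W) :
    Tendsto (fun n => (T ^ n) w) atTop (nhds 0) := by
  classical
  let P : Submodule ℂ W :=
    { carrier := {x | Tendsto (fun n => (T ^ n) x) atTop (nhds 0)}
      add_mem' := by
        intro a b ha hb
        have := ha.add hb
        simpa [map_add] using this
      zero_mem' := by
        simpa using (tendsto_const_nhds : Tendsto (fun _ : ℕ => (0 : W)) atTop (nhds 0))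
      smul_mem' := by
        intro c x hx
        have := hx.const_smul c
        simpa [map_smul] using this }
  suffices hle : ∀ μ : ℂ, T.maxGenEigenspace μ ≤ P by
    have hw : w ∈ ⨆ μ : ℂ, T.maxGenEigenspace μ := by
      rw [Module.End.iSup_maxGenEigenspace_eq_top T]; trivial
    exact (iSup_le hle) hw
  intro μ x hx
  obtain ⟨k, hk⟩ := (Module.End.mem_maxGenEigenspace T μ x).mp hx
  by_cases hx0 : x = 0
  · subst hx0
    show Tendsto (fun n => (T ^ n) (0 : W)) atTop (nhds 0)
    simpa using (tendsto_const_nhds : Tendsto (fun _ : ℕ => (0 : W)) atTop (nhds 0))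
  have hk0 : k ≠ 0 := by
    rintro rfl
    simp only [pow_zero, Module.End.one_apply] at hk
    exact hx0 hk
  set N : Module.End ℂ W := T - μ • 1 with hN
  have hEig : T.HasEigenvalue μ := by
    apply Module.End.hasEigenvalue_of_hasGenEigenvalue (k := k)
    rw [Module.End.hasGenEigenvalue_iff]
    intro hbot
    have hxmem : x ∈ T.genEigenspace μ (k : ℕ∞) := by
      rw [Module.End.mem_genEigenspace_nat]
      exact hk
    rw [hbot] at hxmem
    exact hx0 (Submodule.mem_bot ℂ |>.mp hxmem)
  have hr : ‖μ‖ < 1 := h μ hEig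
  have hcomm : Commute N (μ • (1 : Module.End ℂ W)) := (Commute.one_right N).smul_right μ
  have hT : T = N + μ • 1 := by rw [hN]; abel
  have happ : ∀ n : ℕ, (T ^ n) x
      = ∑ j ∈ range (n + 1), ((n.choose j : ℂ) * μ ^ (n - j)) • (N ^ j) x := by
    intro n
    have hpow : T ^ n = ∑ j ∈ range (n + 1),
        N ^ j * (μ • (1 : Module.End ℂ W)) ^ (n - j) * (n.choose j : Module.End ℂ W) := by
      rw [hT, hcomm.add_pow]
    rw [hpow, LinearMap.sum_apply]
    refine Finset.sum_congr rfl fun j _ => ?_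
    have h1 : ((μ : ℂ) • (1 : Module.End ℂ W)) ^ (n - j) = μ ^ (n - j) • 1 := by
      rw [smul_pow, one_pow]
    rw [Module.End.mul_apply, Module.End.mul_apply, Module.End.natCast_apply, h1,
      LinearMap.smul_apply, Module.End.one_apply, map_smul, map_nsmul, mul_smul]
    rw [smul_comm ((n.choose j : ℂ)) (μ ^ (n - j))]
    congr 1
    rw [Nat.cast_smul_eq_nsmul]
  have hNj : ∀ j : ℕ, k ≤ j → (N ^ j) x = 0 := by
    intro j hj
    rw [← Nat.sub_add_cancel hj, pow_add, Module.End.mul_apply, hk, map_zero]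
  have hev : (fun n => (T ^ n) x)
      =ᶠ[atTop] (fun n => ∑ j ∈ range k, ((n.choose j : ℂ) * μ ^ (n - j)) • (N ^ j) x) := by
    filter_upwards [eventually_ge_atTop k] with n hn
    rw [happ n]
    refine (Finset.sum_subset (Finset.range_subset_range.mpr (by omega)) ?_).symm
    intro j _ hj
    rw [hNj j (by simpa using hj), smul_zero]
  have hlim : Tendsto
      (fun n => ∑ j ∈ range k, ((n.choose j : ℂ) * μ ^ (n - j)) • (N ^ j) x)
      atTop (nhds 0) := by
    rw [show (0 : W) = ∑ _j ∈ range k, (0 : W) by simp]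
    refine tendsto_finset_sum _ fun j _ => ?_
    have hsc : Tendsto (fun n : ℕ => (n.choose j : ℂ) * μ ^ (n - j)) atTop (nhds 0) := by
      rw [tendsto_zero_iff_norm_tendsto_zero]
      have heq : ∀ n : ℕ, ‖(n.choose j : ℂ) * μ ^ (n - j)‖
          = (n.choose j : ℝ) * ‖μ‖ ^ (n - j) := by
        intro n
        rw [norm_mul, norm_pow]
        norm_num
      simp only [heq]
      exact aux_tendsto_choose_mul_pow (norm_nonneg μ) hr j
    simpa using hsc.smul_const ((N ^ j) x)
  exact hlim.congr' hev.symm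

/-- Eigenvalues transfer through conjugation by a linear equivalence. -/
lemma aux_conj {R M M' : Type*} [CommRing R] [AddCommGroup M] [Module R M]
    [AddCommGroup M'] [Module R M'] (e : M ≃ₗ[R] M') (f : Module.End R M) {μ : R}
    (h : Module.End.HasEigenvalue (e.conj f) μ) : f.HasEigenvalue μ := by
  obtain ⟨w, hw⟩ := h.exists_hasEigenvector
  have happ : e (f (e.symm w)) = μ • w := by
    have := hw.apply_eq_smul
    rwa [LinearEquiv.conj_apply_apply] at this
  refine Module.End.hasEigenvalue_of_hasEigenvector (x := e.symm w) ⟨?_, ?_⟩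
  · rw [Module.End.mem_eigenspace_iff]
    have : f (e.symm w) = e.symm (μ • w) := by
      rw [← happ, LinearEquiv.symm_apply_apply]
    rw [this, map_smul]
  · simp only [ne_eq, LinearEquiv.map_eq_zero_iff]
    exact hw.right

/-- Real version: if all complex eigenvalues of the complexification have norm `< 1`,
iterates tend pointwise to zero. -/
lemma aux_real_decay {E : Type*} [NormedAddCommGroup E] [NormedSpace ℝ E]
    [FiniteDimensional ℝ E] (A : E →ₗ[ℝ] E)
    (h : ∀ μ : ℂ, Module.End.HasEigenvalue (LinearMap.baseChange ℂ A) μ → ‖μ‖ < 1)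
    (v : E) : Tendsto (fun n => (A ^ n) v) atTop (nhds 0) := by
  classical
  set d := Module.finrank ℝ E with hd
  let b : Module.Basis (Fin d) ℝ E := Module.finBasis ℝ E
  let bC : Module.Basis (Fin d) ℂ (ℂ ⊗[ℝ] E) := b.baseChange ℂ
  let e : (ℂ ⊗[ℝ] E) ≃ₗ[ℂ] (Fin d → ℂ) := bC.equivFun
  let T : Module.End ℂ (Fin d → ℂ) := e.conj (A.baseChange ℂ)
  have hT : ∀ μ : ℂ, T.HasEigenvalue μ → ‖μ‖ < 1 := fun μ hμ => h μ (aux_conj e _ hμ)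
  have key : Tendsto (fun n => (T ^ n) (e ((1 : ℂ) ⊗ₜ[ℝ] v))) atTop (nhds 0) :=
    aux_complex_decay T hT _
  have hiter : ∀ n : ℕ, (T ^ n) (e ((1 : ℂ) ⊗ₜ[ℝ] v)) = e ((1 : ℂ) ⊗ₜ[ℝ] ((A ^ n) v)) := by
    intro n
    induction n with
    | zero => simp
    | succ n ih =>
      rw [pow_succ', Module.End.mul_apply, ih]
      show e ((A.baseChange ℂ) (e.symm (e ((1 : ℂ) ⊗ₜ[ℝ] ((A ^ n) v))))) = _
      rw [LinearEquiv.symm_apply_apply, LinearMap.baseChange_tmul]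
      congr 1
      rw [pow_succ', Module.End.mul_apply]
  rw [show Tendsto (fun n => (T ^ n) (e ((1 : ℂ) ⊗ₜ[ℝ] v))) atTop (nhds 0)
      ↔ Tendsto (fun n => e ((1 : ℂ) ⊗ₜ[ℝ] ((A ^ n) v))) atTop (nhds 0) by
    constructor <;> exact fun ht => ht.congr (by intro n; rw [hiter n]) <;> skip] at key
  -- componentwise convergence of coordinates
  have hcomp : ∀ i : Fin d, Tendsto (fun n => b.repr ((A ^ n) v) i) atTop (nhds 0) := by
    intro i
    have h1 : Tendsto (fun n => (e ((1 : ℂ) ⊗ₜ[ℝ] ((A ^ n) v))) i) atTop (nhds 0) := by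
      have := tendsto_pi_nhds.mp key i
      simpa using this
    have h2 : ∀ n : ℕ, (e ((1 : ℂ) ⊗ₜ[ℝ] ((A ^ n) v))) i
        = ((b.repr ((A ^ n) v) i : ℝ) : ℂ) := by
      intro n
      show (bC.equivFun ((1 : ℂ) ⊗ₜ[ℝ] ((A ^ n) v))) i = _
      rw [Module.Basis.equivFun_apply]
      show (b.baseChange ℂ).repr ((1 : ℂ) ⊗ₜ[ℝ] ((A ^ n) v)) i = _
      rw [Module.Basis.baseChange_repr_tmul]
      simp [Algebra.algebraMap_eq_smul_one]
    rw [tendsto_zero_iff_norm_tendsto_zero]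
    rw [tendsto_zero_iff_norm_tendsto_zero] at h1
    refine h1.congr fun n => ?_
    rw [h2 n, Complex.norm_real]
  have hsum : (fun n => (A ^ n) v) = fun n => ∑ i, b.repr ((A ^ n) v) i • b i :=
    funext fun n => (b.sum_repr _).symm
  rw [hsum, show (0 : E) = ∑ _i : Fin d, (0 : E) by simp]
  exact tendsto_finset_sum _ fun i _ => by simpa using (hcomp i).smul_const (b i)

/-- If a nonempty compact set `F` is mapped onto itself by `L`, and
`V = ℝ·c⁺ ⊕ H` with `L c⁺ = c⁺`, `H` invariant, and spectral radius of `L` on `H`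
strictly less than `1`, then `F` is contained in the line spanned by `c⁺`. -/
theorem compact_invariant_set_in_fixed_line
    (V : Type*) [NormedAddCommGroup V] [NormedSpace ℝ V] [FiniteDimensional ℝ V]
    (L : V →ₗ[ℝ] V) (F : Set V) (hFne : F.Nonempty) (hFc : IsCompact F)
    (hLF : L '' F = F)
    (cplus : V) (hfix : L cplus = cplus)
    (H : Submodule ℝ V) (hH : ∀ x ∈ H, L x ∈ H)
    (hcompl : IsCompl (Submodule.span ℝ {cplus}) H)
    (hspec : ∀ μ : ℂ, Module.End.HasEigenvalue
      (LinearMap.baseChange ℂ (LinearMap.restrict L hH)) μ → ‖μ‖ < 1) :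
    F ⊆ (Submodule.span ℝ {cplus} : Submodule ℝ V) := by
  classical
  set p : Submodule ℝ V := Submodule.span ℝ {cplus} with hp
  set A : H →ₗ[ℝ] H := LinearMap.restrict L hH with hA
  set π : V →ₗ[ℝ] H := H.projectionOnto p hcompl.symm with hπ
  -- L maps the line into itself
  have hLp : ∀ s ∈ p, L s ∈ p := by
    intro s hs
    obtain ⟨a, rfl⟩ := Submodule.mem_span_singleton.mp hs
    rw [map_smul, hfix]
    exact Submodule.smul_mem _ _ (Submodule.mem_span_singleton_self _)
  -- the projection intertwines L and A
  have hπL : ∀ z : V, π (L z) = A (π z) := by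
    intro z
    have hπH : ∀ (u : H), π (u : V) = u :=
      fun u => Submodule.projectionOnto_apply_left hcompl.symm u
    have hmem : z - ((π z : H) : V) ∈ p := by
      apply (Submodule.projectionOnto_apply_eq_zero_iff hcompl.symm).mp
      rw [map_sub, hπH (π z), sub_self]
    have hsplit : z = (z - ((π z : H) : V)) + ((π z : H) : V) := by abel
    calc π (L z) = π (L (z - ((π z : H) : V))) + π (L ((π z : H) : V)) := by
          conv_lhs => rw [hsplit]
          rw [map_add, map_add]
      _ = 0 + π (L ((π z : H) : V)) := by
          rw [Submodule.projectionOnto_apply_of_mem_right hcompl.symm (hLp _ hmem)]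
      _ = A (π z) := by
          rw [zero_add]
          have h1 : π (L ((π z : H) : V)) = (⟨L ((π z : H) : V), hH _ (π z).2⟩ : H) :=
            hπH ⟨L ((π z : H) : V), hH _ (π z).2⟩
          rw [h1, hA, LinearMap.restrict_apply]
  have hπLn : ∀ (n : ℕ) (z : V), π ((L ^ n) z) = (A ^ n) (π z) := by
    intro n
    induction n with
    | zero => intro z; simp
    | succ n ih =>
      intro z
      rw [pow_succ', pow_succ', Module.End.mul_apply, Module.End.mul_apply, hπL, ih]
  -- every point of F has preimages of all orders in F
  have hpre : ∀ x ∈ F, ∀ n : ℕ, ∃ y ∈ F, (L ^ n) y = x := by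
    intro x hx n
    induction n with
    | zero => exact ⟨x, hx, by simp⟩
    | succ n ih =>
      obtain ⟨y, hyF, hyx⟩ := ih
      have hy' : y ∈ L '' F := by rw [hLF]; exact hyF
      obtain ⟨z, hzF, hzy⟩ := hy'
      refine ⟨z, hzF, ?_⟩
      rw [pow_succ, Module.End.mul_apply, hzy, hyx]
  -- a bound for ‖π y‖ on F
  have hπcont : Continuous fun y : V => (π y : H) :=
    LinearMap.continuous_of_finiteDimensional π
  obtain ⟨D, hD⟩ := hFc.exists_bound_of_continuousOn
    (f := fun y : V => (π y : H)) hπcont.continuousOn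
  -- uniform decay of the iterates of A
  have hptwise : ∀ u : H, Tendsto (fun n => (A ^ n) u) atTop (nhds 0) :=
    fun u => aux_real_decay A hspec u
  let bH : Module.Basis (Fin (Module.finrank ℝ H)) ℝ H := Module.finBasis ℝ H
  obtain ⟨C, hC0, hCle⟩ := bH.exists_opNorm_le (F := H)
  set M : ℕ → ℝ := fun n => ∑ i, ‖(A ^ n) (bH i)‖ with hM
  have hMn : Tendsto M atTop (nhds 0) := by
    rw [hM, show (0 : ℝ) = ∑ _i : Fin (Module.finrank ℝ H), (0 : ℝ) by simp]
    exact tendsto_finset_sum _ fun i _ => by simpa using (hptwise (bH i)).norm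
  have hM0 : ∀ n, 0 ≤ M n := fun n => Finset.sum_nonneg fun i _ => norm_nonneg _
  have hbound : ∀ (n : ℕ) (u : H), ‖(A ^ n) u‖ ≤ C * M n * ‖u‖ := by
    intro n u
    have h1 : ∀ i, ‖(LinearMap.toContinuousLinearMap (A ^ n)) (bH i)‖ ≤ M n := by
      intro i
      rw [LinearMap.coe_toContinuousLinearMap']
      exact Finset.single_le_sum (fun i _ => norm_nonneg ((A ^ n) (bH i)))
        (Finset.mem_univ i)
    have h2 : ‖LinearMap.toContinuousLinearMap (A ^ n)‖ ≤ C * M n := hCle (hM0 n) h1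
    calc ‖(A ^ n) u‖ = ‖(LinearMap.toContinuousLinearMap (A ^ n)) u‖ := by
          rw [LinearMap.coe_toContinuousLinearMap']
      _ ≤ ‖LinearMap.toContinuousLinearMap (A ^ n)‖ * ‖u‖ :=
          ContinuousLinearMap.le_opNorm _ _
      _ ≤ C * M n * ‖u‖ := mul_le_mul_of_nonneg_right h2 (norm_nonneg _)
  -- conclusion
  intro x hx
  have hkey : ∀ n : ℕ, ‖π x‖ ≤ C * M n * D := by
    intro n
    obtain ⟨y, hyF, hyx⟩ := hpre x hx n
    have hπx : π x = (A ^ n) (π y) := by rw [← hyx, hπLn]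
    rw [hπx]
    calc ‖(A ^ n) (π y)‖ ≤ C * M n * ‖π y‖ := hbound n (π y)
      _ ≤ C * M n * D := by
          apply mul_le_mul_of_nonneg_left (hD y hyF)
          exact mul_nonneg (le_of_lt hC0) (hM0 n)
  have hR : Tendsto (fun n => C * M n * D) atTop (nhds 0) := by
    simpa using ((hMn.const_mul C).mul_const D)
  have hle : ‖π x‖ ≤ 0 := ge_of_tendsto' hR hkey
  have hzero : π x = 0 := by rwa [norm_le_zero_iff] at hle
  exact (Submodule.projectionOnto_apply_eq_zero_iff hcompl.symm).mp hzero
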